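/- Linear state-space (dynamic linear model) structure yields adjusted orthogonality: let X, Z, ω be random vectors and let Y be the random vector defined componentwise by Y_i = Σ_j G_{ij}·X_j + ω_i for a real matrix G. If Cov(ω, X) = 0 and Cov(ω, Z) = 0, then Cov_X(Y, Z) = 0, i.e. Y and Z are adjusted orthogonal given X. -/

import Mathlib

open MeasureTheory Matrix

variable {Ω : Type*}

/-- The covariance matrix of two random vectors `B` (dimension `m`) and `D` (dimension `n`):
the `(i,j)` entry is `E[Bᵢ·Dⱼ] − E[Bᵢ]·E[Dⱼ]`. -/
noncomputable def cov [MeasurableSpace Ω] (μ : Measure Ω) {m n : ℕ}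
    (B : Fin m → Ω → ℝ) (D : Fin n → Ω → ℝ) : Matrix (Fin m) (Fin n) ℝ :=
  Matrix.of fun i j =>
    (∫ ω, B i ω * D j ω ∂μ) - (∫ ω, B i ω ∂μ) * (∫ ω, D j ω ∂μ)

/-- `W` is a Moore–Penrose inverse of `V`. -/
def IsMoorePenrose {m n : ℕ} (V : Matrix (Fin m) (Fin n) ℝ)
    (W : Matrix (Fin n) (Fin m) ℝ) : Prop :=
  V * W * V = V ∧ W * V * W = W ∧ (V * W)ᵀ = V * W ∧ (W * V)ᵀ = W * V

/-- The adjusted expectation `E_D(B)` (computed with the matrix `W`, intended to be the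
Moore–Penrose inverse of `Var(D)`): the `i`-th component is
`E[Bᵢ] + Σ_j (Cov(B,D)·W)_{ij}·(Dⱼ − E[Dⱼ])`. -/
noncomputable def adjExp [MeasurableSpace Ω] (μ : Measure Ω) {m n : ℕ}
    (B : Fin m → Ω → ℝ) (D : Fin n → Ω → ℝ)
    (W : Matrix (Fin n) (Fin n) ℝ) : Fin m → Ω → ℝ :=
  fun i ω => (∫ ω', B i ω' ∂μ) + ∑ j, (cov μ B D * W) i j * (D j ω - ∫ ω', D j ω' ∂μ)

/-- The adjusted covariance `Cov_D(B,C) = Cov(B − E_D(B), C − E_D(C))`. -/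
noncomputable def adjCov [MeasurableSpace Ω] (μ : Measure Ω) {m p n : ℕ}
    (B : Fin m → Ω → ℝ) (C : Fin p → Ω → ℝ) (D : Fin n → Ω → ℝ)
    (W : Matrix (Fin n) (Fin n) ℝ) : Matrix (Fin m) (Fin p) ℝ :=
  cov μ (fun i ω => B i ω - adjExp μ B D W i ω) (fun j ω => C j ω - adjExp μ C D W j ω)

set_option linter.unusedSectionVars false

section Aux
variable [MeasurableSpace Ω] {μ : Measure Ω} [IsProbabilityMeasure μ]

noncomputable def covS (μ : Measure Ω) (f g : Ω → ℝ) : ℝ :=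
  (∫ ω, f ω * g ω ∂μ) - (∫ ω, f ω ∂μ) * (∫ ω, g ω ∂μ)

lemma int_of_L2 {f : Ω → ℝ} (hf : MemLp f 2 μ) : Integrable f μ :=
  hf.integrable (by norm_num)

lemma mul_int_L2 {f g : Ω → ℝ} (hf : MemLp f 2 μ) (hg : MemLp g 2 μ) :
    Integrable (fun ω => f ω * g ω) μ := by
  have h : MemLp (g • f) 1 μ := hf.smul hg
  rw [memLp_one_iff_integrable] at h
  have : (g • f) = fun ω => f ω * g ω := by funext ω; simp [mul_comm]
  rwa [this] at h

lemma covS_comm (f g : Ω → ℝ) : covS μ f g = covS μ g f := by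
  simp [covS, mul_comm]

lemma covS_sub_left {f f' g : Ω → ℝ} (hf : MemLp f 2 μ) (hf' : MemLp f' 2 μ)
    (hg : MemLp g 2 μ) :
    covS μ (fun ω => f ω - f' ω) g = covS μ f g - covS μ f' g := by
  unfold covS
  have h1 : ∫ ω, (f ω - f' ω) * g ω ∂μ = ∫ ω, f ω * g ω ∂μ - ∫ ω, f' ω * g ω ∂μ := by
    rw [← integral_sub (mul_int_L2 hf hg) (mul_int_L2 hf' hg)]
    congr 1; funext ω; ring
  rw [h1, integral_sub (int_of_L2 hf) (int_of_L2 hf')]; ring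

lemma covS_sum_left {n : ℕ} {F : Fin n → Ω → ℝ} (hF : ∀ i, MemLp (F i) 2 μ)
    {g : Ω → ℝ} (hg : MemLp g 2 μ) (c : Fin n → ℝ) :
    covS μ (fun ω => ∑ i, c i * F i ω) g = ∑ i, c i * covS μ (F i) g := by
  unfold covS
  have h1 : ∫ ω, (∑ i, c i * F i ω) * g ω ∂μ = ∑ i, c i * ∫ ω, F i ω * g ω ∂μ := by
    simp_rw [Finset.sum_mul, mul_assoc]
    rw [integral_finset_sum _ (fun i _ => (mul_int_L2 (hF i) hg).const_mul (c i))]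
    simp_rw [integral_const_mul]
  have h2 : ∫ ω, (∑ i, c i * F i ω) ∂μ = ∑ i, c i * ∫ ω, F i ω ∂μ := by
    rw [integral_finset_sum _ (fun i _ => (int_of_L2 (hF i)).const_mul (c i))]
    simp_rw [integral_const_mul]
  rw [h1, h2, Finset.sum_mul, ← Finset.sum_sub_distrib]
  exact Finset.sum_congr rfl fun i _ => by ring

lemma covS_sub_const_left {f g : Ω → ℝ} (hf : MemLp f 2 μ) (hg : MemLp g 2 μ) (c : ℝ) :
    covS μ (fun ω => f ω - c) g = covS μ f g := by
  unfold covS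
  have h1 : ∫ ω, (f ω - c) * g ω ∂μ = ∫ ω, f ω * g ω ∂μ - c * ∫ ω, g ω ∂μ := by
    rw [← integral_const_mul, ← integral_sub (mul_int_L2 hf hg)
      ((int_of_L2 hg).const_mul c)]
    congr 1; funext ω; ring
  have h2 : ∫ ω, (f ω - c) ∂μ = (∫ ω, f ω ∂μ) - c := by
    rw [integral_sub (int_of_L2 hf) (integrable_const c), integral_const]; simp
  rw [h1, h2]; ring

lemma covS_zero_of_self_zero {f g : Ω → ℝ} (hf : MemLp f 2 μ) (hg : MemLp g 2 μ)
    (h : covS μ f f = 0) : covS μ f g = 0 := by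
  set m := ∫ ω, f ω ∂μ with hm
  have hint : Integrable (fun ω => (f ω - m) ^ 2) μ := by
    have := mul_int_L2 (hf.sub (memLp_const m)) (hf.sub (memLp_const m))
    simpa [pow_two] using this
  have hzero : ∫ ω, (f ω - m) ^ 2 ∂μ = 0 := by
    have e : (fun ω => (f ω - m) ^ 2)
        = fun ω => (f ω * f ω + m * m) - (2 * m) * f ω := by funext ω; ring
    have hA : Integrable (fun ω => f ω * f ω + m * m) μ :=
      (mul_int_L2 hf hf).add (integrable_const (m * m))
    have hB : Integrable (fun ω => (2 * m) * f ω) μ := (int_of_L2 hf).const_mul (2 * m)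
    rw [e, integral_sub hA hB,
      integral_add (mul_int_L2 hf hf) (integrable_const (m * m)), integral_const]
    have h2 : ∫ ω, (2 * m) * f ω ∂μ = (2 * m) * m := by rw [integral_const_mul, ← hm]
    have h3 : ∫ ω, f ω * f ω ∂μ = m * m := by
      have h' := h; unfold covS at h'; rw [← hm] at h'; linarith
    rw [h2, h3]
    simp only [probReal_univ, measure_univ, ENNReal.toReal_one, smul_eq_mul, one_mul]
    ring
  have hae : f =ᵐ[μ] fun _ => m := by
    have h0 := (integral_eq_zero_iff_of_nonneg (fun ω => sq_nonneg (f ω - m)) hint).mp hzero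
    filter_upwards [h0] with ω hω
    have : (f ω - m) ^ 2 = 0 := hω
    have := pow_eq_zero_iff (n := 2) (by norm_num) |>.mp this
    linarith [this]
  unfold covS
  have h1 : ∫ ω, f ω * g ω ∂μ = ∫ ω, m * g ω ∂μ :=
    integral_congr_ae (by filter_upwards [hae] with ω hω; rw [hω])
  rw [h1, integral_const_mul]; ring

lemma memL2_sum {n : ℕ} {F : Fin n → Ω → ℝ} (hF : ∀ i, MemLp (F i) 2 μ)
    (c : Fin n → ℝ) : MemLp (fun ω => ∑ i, c i * F i ω) 2 μ := by
  have h := memLp_finset_sum' (μ := μ) (p := 2) Finset.univ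
    (f := fun i ω => c i * F i ω) (fun i _ => (hF i).const_mul (c i))
  have e : (∑ i : Fin n, fun ω => c i * F i ω) = fun ω => ∑ i, c i * F i ω := by
    funext ω; simp
  rwa [e] at h

lemma covS_add_left {f f' g : Ω → ℝ} (hf : MemLp f 2 μ) (hf' : MemLp f' 2 μ)
    (hg : MemLp g 2 μ) :
    covS μ (fun ω => f ω + f' ω) g = covS μ f g + covS μ f' g := by
  unfold covS
  have h1 : ∫ ω, (f ω + f' ω) * g ω ∂μ = ∫ ω, f ω * g ω ∂μ + ∫ ω, f' ω * g ω ∂μ := by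
    rw [← integral_add (mul_int_L2 hf hg) (mul_int_L2 hf' hg)]
    congr 1; funext ω; ring
  rw [h1, integral_add (int_of_L2 hf) (int_of_L2 hf')]; ring

lemma covS_sub_right {f g g' : Ω → ℝ} (hf : MemLp f 2 μ) (hg : MemLp g 2 μ)
    (hg' : MemLp g' 2 μ) :
    covS μ f (fun ω => g ω - g' ω) = covS μ f g - covS μ f g' := by
  rw [covS_comm, covS_sub_left hg hg' hf, covS_comm g f, covS_comm g' f]

lemma covS_sum_right {n : ℕ} {F : Fin n → Ω → ℝ} (hF : ∀ i, MemLp (F i) 2 μ)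
    {g : Ω → ℝ} (hg : MemLp g 2 μ) (c : Fin n → ℝ) :
    covS μ g (fun ω => ∑ i, c i * F i ω) = ∑ i, c i * covS μ g (F i) := by
  rw [covS_comm, covS_sum_left hF hg c]
  exact Finset.sum_congr rfl fun i _ => by rw [covS_comm]

end Aux

/-- dynamic linear model structure: if `Y_i = Σ_j G_{ij}·X_j + ω_i` with
`Cov(ω,X) = 0` and `Cov(ω,Z) = 0`, then `Cov_X(Y,Z) = 0`, i.e. `Y` and `Z` are adjusted
orthogonal given `X` (with `W_X` the Moore–Penrose inverse of `Var(X)`). -/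
theorem dlm_adjOrth [MeasurableSpace Ω] (μ : Measure Ω) [IsProbabilityMeasure μ]
    {mx my mz : ℕ} (X : Fin mx → Ω → ℝ) (Z : Fin mz → Ω → ℝ) (eps : Fin my → Ω → ℝ)
    (G : Matrix (Fin my) (Fin mx) ℝ)
    (hX : ∀ i, Measurable (X i) ∧ MemLp (X i) 2 μ)
    (hZ : ∀ i, Measurable (Z i) ∧ MemLp (Z i) 2 μ)
    (heps : ∀ i, Measurable (eps i) ∧ MemLp (eps i) 2 μ)
    (Y : Fin my → Ω → ℝ) (hY : ∀ i ω, Y i ω = (∑ j, G i j * X j ω) + eps i ω)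
    (hepsX : cov μ eps X = 0) (hepsZ : cov μ eps Z = 0)
    (WX : Matrix (Fin mx) (Fin mx) ℝ) (hWX : IsMoorePenrose (cov μ X X) WX) :
    adjCov μ Y Z X WX = 0 := by
  obtain ⟨h1, _h2, _h3, _h4⟩ := hWX
  have hX2 : ∀ i, MemLp (X i) 2 μ := fun i => (hX i).2
  have hZ2 : ∀ i, MemLp (Z i) 2 μ := fun i => (hZ i).2
  have heps2 : ∀ i, MemLp (eps i) 2 μ := fun i => (heps i).2
  have hYfun : ∀ i, Y i = fun ω => (∑ j, G i j * X j ω) + eps i ω :=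
    fun i => funext (hY i)
  have hsumX2 : ∀ i, MemLp (fun ω => ∑ j, G i j * X j ω) 2 μ := fun i =>
    memL2_sum hX2 (G i)
  have hY2 : ∀ i, MemLp (Y i) 2 μ := by
    intro i; rw [hYfun i]; exact (hsumX2 i).add (heps2 i)
  set V : Matrix (Fin mx) (Fin mx) ℝ := cov μ X X with hV
  set M : Matrix (Fin mx) (Fin mz) ℝ := cov μ X Z with hM
  -- Step B : cov μ Y D = G * cov μ X D whenever cov μ eps D = 0
  have covY : ∀ (n : ℕ) (D : Fin n → Ω → ℝ), (∀ l, MemLp (D l) 2 μ) →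
      cov μ eps D = 0 → cov μ Y D = G * cov μ X D := by
    intro n D hD hepsD
    ext i l
    show covS μ (Y i) (D l) = (G * cov μ X D) i l
    rw [hYfun i, covS_add_left (hsumX2 i) (heps2 i) (hD l),
      covS_sum_left hX2 (hD l) (G i)]
    have he0 : covS μ (eps i) (D l) = 0 := by
      have := congrFun (congrFun hepsD i) l; exact this
    rw [he0, add_zero, Matrix.mul_apply]
    rfl
  have hYX : cov μ Y X = G * V := covY mx X hX2 hepsX
  have hYZ : cov μ Y Z = G * M := covY mz Z hZ2 hepsZ
  -- Step A : V * WX * M = M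
  have hVWXM : V * WX * M = M := by
    have hQ : ((1 : Matrix (Fin mx) (Fin mx) ℝ) - V * WX) * M = 0 := by
      set Q : Matrix (Fin mx) (Fin mx) ℝ := (1 : Matrix (Fin mx) (Fin mx) ℝ) - V * WX
        with hQdef
      have hQV : Q * V = 0 := by
        rw [hQdef, Matrix.sub_mul, Matrix.one_mul, h1, sub_self]
      ext k j
      have hg2 : MemLp (fun ω => ∑ i, Q k i * X i ω) 2 μ := memL2_sum hX2 (Q k)
      have hgg : covS μ (fun ω => ∑ i, Q k i * X i ω)
          (fun ω => ∑ i, Q k i * X i ω) = 0 := by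
        rw [covS_sum_left hX2 hg2 (Q k)]
        have hz : ∀ i, covS μ (X i) (fun ω => ∑ i', Q k i' * X i' ω) = 0 := by
          intro i
          rw [covS_sum_right hX2 (hX2 i) (Q k)]
          have hsymm : ∀ i', covS μ (X i) (X i') = V i' i := by
            intro i'
            rw [covS_comm]; rfl
          calc ∑ i', Q k i' * covS μ (X i) (X i')
              = ∑ i', Q k i' * V i' i :=
                Finset.sum_congr rfl fun i' _ => by rw [hsymm i']
            _ = (Q * V) k i := (Matrix.mul_apply).symm
            _ = 0 := by rw [hQV]; rfl
        simp [hz]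
      show (Q * M) k j = (0 : Matrix (Fin mx) (Fin mz) ℝ) k j
      rw [Matrix.mul_apply, Matrix.zero_apply]
      calc ∑ i, Q k i * M i j
          = covS μ (fun ω => ∑ i, Q k i * X i ω) (Z j) :=
            (covS_sum_left hX2 (hZ2 j) (Q k)).symm
        _ = 0 := covS_zero_of_self_zero hg2 (hZ2 j) hgg
    have h' := hQ
    rw [Matrix.sub_mul, Matrix.one_mul, sub_eq_zero] at h'
    exact h'.symm
  -- Step C : expand the adjusted covariance entrywise
  ext i j
  set P : Matrix (Fin my) (Fin mx) ℝ := cov μ Y X * WX with hP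
  set Q2 : Matrix (Fin mz) (Fin mx) ℝ := cov μ Z X * WX with hQ2
  have hsumPX2 : MemLp (fun ω => ∑ k, P i k * X k ω) 2 μ := memL2_sum hX2 (P i)
  have hsumQX2 : MemLp (fun ω => ∑ l, Q2 j l * X l ω) 2 μ := memL2_sum hX2 (Q2 j)
  have hfY : MemLp (fun ω => Y i ω - ∑ k, P i k * X k ω) 2 μ :=
    (hY2 i).sub hsumPX2
  have hfZ : MemLp (fun ω => Z j ω - ∑ l, Q2 j l * X l ω) 2 μ :=
    (hZ2 j).sub hsumQX2
  have eY : (fun ω => Y i ω - adjExp μ Y X WX i ω)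
      = fun ω => (Y i ω - ∑ k, P i k * X k ω)
        - ((∫ ω', Y i ω' ∂μ) - ∑ k, P i k * ∫ ω', X k ω' ∂μ) := by
    funext ω
    simp only [adjExp, ← hP, mul_sub, Finset.sum_sub_distrib]
    ring
  have eZ : (fun ω => Z j ω - adjExp μ Z X WX j ω)
      = fun ω => (Z j ω - ∑ l, Q2 j l * X l ω)
        - ((∫ ω', Z j ω' ∂μ) - ∑ l, Q2 j l * ∫ ω', X l ω' ∂μ) := by
    funext ω
    simp only [adjExp, ← hQ2, mul_sub, Finset.sum_sub_distrib]
    ring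
  show covS μ (fun ω => Y i ω - adjExp μ Y X WX i ω)
      (fun ω => Z j ω - adjExp μ Z X WX j ω) = (0 : Matrix (Fin my) (Fin mz) ℝ) i j
  have hfZc : MemLp (fun ω => (Z j ω - ∑ l, Q2 j l * X l ω)
      - ((∫ ω', Z j ω' ∂μ) - ∑ l, Q2 j l * ∫ ω', X l ω' ∂μ)) 2 μ :=
    hfZ.sub (memLp_const _)
  rw [Matrix.zero_apply, eY, eZ,
    covS_sub_const_left hfY hfZc _,
    covS_comm, covS_sub_const_left hfZ hfY _, covS_comm,
    covS_sub_right hfY (hZ2 j) hsumQX2,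
    covS_sub_left (hY2 i) hsumPX2 (hZ2 j),
    covS_sum_left hX2 (hZ2 j) (P i),
    covS_sum_right hX2 hfY (Q2 j)]
  have hYXe : ∀ l, covS μ (Y i) (X l) = (G * V) i l := by
    intro l; rw [show covS μ (Y i) (X l) = cov μ Y X i l from rfl, hYX]
  have hYZe : covS μ (Y i) (Z j) = (G * M) i j := by
    rw [show covS μ (Y i) (Z j) = cov μ Y Z i j from rfl, hYZ]
  have hPMe : ∑ k, P i k * covS μ (X k) (Z j) = (G * M) i j := by
    have hstep : ∑ k, P i k * covS μ (X k) (Z j) = (P * M) i j := by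
      rw [Matrix.mul_apply]; rfl
    rw [hstep, hP, hYX, Matrix.mul_assoc (G * V) WX M,
      Matrix.mul_assoc G V (WX * M), ← Matrix.mul_assoc V WX M, hVWXM]
  have hterm : ∀ l, covS μ (fun ω => Y i ω - ∑ k, P i k * X k ω) (X l) = 0 := by
    intro l
    rw [covS_sub_left (hY2 i) hsumPX2 (hX2 l), covS_sum_left hX2 (hX2 l) (P i)]
    have hPV : ∑ k, P i k * covS μ (X k) (X l) = (G * V) i l := by
      have hstep : ∑ k, P i k * covS μ (X k) (X l) = (P * V) i l := by
        rw [Matrix.mul_apply]; rfl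
      rw [hstep, hP, hYX, Matrix.mul_assoc (G * V) WX V,
        Matrix.mul_assoc G V (WX * V), ← Matrix.mul_assoc V WX V, h1]
    rw [hPV, hYXe l, sub_self]
  rw [hYZe, hPMe]
  simp [hterm]
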